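/- Let μ be a translation-invariant percolation on ℤ². Then μ-almost surely, for every infinite cluster C of G_η the following holds: if the set of second coordinates of the vertices of C is bounded below, with minimum b, then the set {x ∈ ℤ : (x,b) ∈ C} is infinite. -/

import Mathlib

open MeasureTheory

/-- Vertices of the square lattice `ℤ²`. -/
abbrev Vertex : Type := ℤ × ℤ

/-- Edges of `ℤ²`, encoded as a base vertex together with a direction:
`false` is the horizontal edge from `v` to `v + (1,0)`, `true` the vertical
edge from `v` to `v + (0,1)`. -/
abbrev Edge : Type := Vertex × Bool

/-- Percolation configurations `η : E(ℤ²) → {0,1}`. -/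
abbrev Config : Type := Edge → Bool

/-- The displacement vector of an edge with direction `d`. -/
def edgeDir (d : Bool) : Vertex := if d then (0, 1) else (1, 0)

/-- `joins e u v` says that the edge `e` has endpoints `u` and `v`. -/
def joins (e : Edge) (u v : Vertex) : Prop :=
  (e.1 = u ∧ u + edgeDir e.2 = v) ∨ (e.1 = v ∧ v + edgeDir e.2 = u)

/-- The open subgraph `G_η` of `ℤ²`: two vertices are adjacent iff some open
edge joins them. -/
def openGraph (η : Config) : SimpleGraph Vertex where
  Adj u v := u ≠ v ∧ ∃ e : Edge, η e = true ∧ joins e u v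
  symm := by
    constructor
    rintro u v ⟨hne, e, he, hj⟩
    exact ⟨hne.symm, e, he, hj.symm⟩
  loopless := by
    constructor
    rintro u ⟨hne, -⟩
    exact hne rfl

/-- The half-plane restriction `HP_b(G_η)`: keep only open edges with both
endpoints having second coordinate `≥ b`. -/
def hpGraph (b : ℤ) (η : Config) : SimpleGraph Vertex where
  Adj u v := b ≤ u.2 ∧ b ≤ v.2 ∧ (openGraph η).Adj u v
  symm := by
    constructor
    rintro u v ⟨hu, hv, h⟩
    exact ⟨hv, hu, h.symm⟩
  loopless := by
    constructor
    rintro u ⟨-, -, h⟩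
    exact (openGraph η).loopless.irrefl u h

/-- `C` is a cluster (connected component) of `G_η`. -/
def IsCluster (η : Config) (C : Set Vertex) : Prop :=
  ∃ v : Vertex, C = {u | (openGraph η).Reachable v u}

/-- `C` is a cluster of the half-plane restriction `HP_b(G_η)`: the component
of some vertex lying in the half-plane `{y ≥ b}`. -/
def IsClusterHP (b : ℤ) (η : Config) (C : Set Vertex) : Prop :=
  ∃ v : Vertex, b ≤ v.2 ∧ C = {u | (hpGraph b η).Reachable v u}

/-- The dual configuration `η*`: a dual edge is open iff the primal edge it
crosses is closed.  The dual edge with base `(a,c)` and direction `false`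
(going to `(a+1,c)`) crosses the primal vertical edge `{(a+1,c),(a+1,c+1)}`;
the dual edge with base `(a,c)` and direction `true` (going to `(a,c+1)`)
crosses the primal horizontal edge `{(a,c+1),(a+1,c+1)}`. -/
def dualConfig (η : Config) : Config := fun e =>
  if e.2 then !η ((e.1.1, e.1.2 + 1), false) else !η ((e.1.1 + 1, e.1.2), true)

/-- Translation of configurations: `(T_t η)(e) = η (e - t)`. -/
def shift (t : Vertex) (η : Config) : Config := fun e => η (e.1 - t, e.2)

open ENNReal

-- auxiliary definitions
def cl (η : Config) (v : Vertex) : Set Vertex := {u | (openGraph η).Reachable v u}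

lemma openGraph_adj (η : Config) (u v : Vertex) :
    (openGraph η).Adj u v ↔ (u ≠ v ∧ ∃ e : Edge, η e = true ∧ joins e u v) := Iff.rfl

lemma meas_adj (u v : Vertex) : MeasurableSet {η : Config | (openGraph η).Adj u v} := by
  have h : {η : Config | (openGraph η).Adj u v} =
      ⋃ (e : Edge) (_ : u ≠ v ∧ joins e u v), {η : Config | η e = true} := by
    ext η
    simp only [Set.mem_setOf_eq, Set.mem_iUnion, openGraph_adj]
    tauto
  rw [h]
  refine MeasurableSet.iUnion fun e => MeasurableSet.iUnion fun _ => ?_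
  have : {η : Config | η e = true} = (fun η : Config => η e) ⁻¹' {true} := by
    ext; simp
  rw [this]
  exact measurable_pi_apply e (measurableSet_singleton true)

lemma meas_chain : ∀ (l : List Vertex) (u : Vertex),
    MeasurableSet {η : Config | List.Chain (openGraph η).Adj u l}
  | [], u => by
      have : {η : Config | List.Chain (openGraph η).Adj u []} = Set.univ := by
        ext; simp [List.Chain]
      rw [this]; exact MeasurableSet.univ
  | (w :: l), u => by
      have : {η : Config | List.Chain (openGraph η).Adj u (w :: l)} =
          {η : Config | (openGraph η).Adj u w} ∩ {η : Config | List.Chain (openGraph η).Adj w l} := by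
        ext; simp [List.Chain, List.isChain_cons_cons]
      rw [this]
      exact (meas_adj u w).inter (meas_chain l w)

lemma meas_reach (u v : Vertex) : MeasurableSet {η : Config | (openGraph η).Reachable u v} := by
  have h : {η : Config | (openGraph η).Reachable u v} =
      ⋃ (l : List Vertex) (_ : (u :: l).getLast (List.cons_ne_nil u l) = v),
        {η : Config | List.Chain (openGraph η).Adj u l} := by
    ext η
    simp only [Set.mem_setOf_eq, Set.mem_iUnion, SimpleGraph.reachable_iff_reflTransGen]
    constructor
    · intro h
      obtain ⟨l, hc, hl⟩ := List.exists_isChain_cons_of_relationReflTransGen h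
      exact ⟨l, hl, hc⟩
    · rintro ⟨l, hl, hc⟩
      exact List.relationReflTransGen_of_exists_isChain_cons l hc hl
  rw [h]
  exact MeasurableSet.iUnion fun l => MeasurableSet.iUnion fun _ => meas_chain l u

lemma meas_imp {P : Set Config} (hP : MeasurableSet P) (q : Prop) :
    MeasurableSet {η | η ∈ P → q} := by
  by_cases h : q
  · have : {η | η ∈ P → q} = Set.univ := Set.eq_univ_of_forall fun η => fun _ => h
    rw [this]; exact MeasurableSet.univ
  · have : {η | η ∈ P → q} = Pᶜ := by ext η; simp [h]
    rw [this]; exact hP.compl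

lemma meas_finite {ι : Type} [Countable ι] (s : Config → Set ι)
    (hs : ∀ x, MeasurableSet {η | x ∈ s η}) : MeasurableSet {η | (s η).Finite} := by
  have h : {η | (s η).Finite} = ⋃ F : Finset ι, ⋂ x : ι, {η | x ∈ s η → x ∈ F} := by
    ext η
    simp only [Set.mem_setOf_eq, Set.mem_iUnion, Set.mem_iInter]
    constructor
    · intro h
      exact ⟨h.toFinset, fun x hx => h.mem_toFinset.mpr hx⟩
    · rintro ⟨F, hF⟩
      exact F.finite_toSet.subset hF
  rw [h]
  exact MeasurableSet.iUnion fun F => MeasurableSet.iInter fun x => meas_imp (hs x) _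

lemma meas_isLeast (s : Config → Set ℤ) (hs : ∀ x, MeasurableSet {η | x ∈ s η}) (b : ℤ) :
    MeasurableSet {η | IsLeast (s η) b} := by
  have h : {η | IsLeast (s η) b} = {η | b ∈ s η} ∩ ⋂ y : ℤ, {η | y ∈ s η → b ≤ y} := by
    ext η
    simp only [Set.mem_setOf_eq, Set.mem_inter_iff, Set.mem_iInter, IsLeast, lowerBounds]
  rw [h]
  exact (hs b).inter (MeasurableSet.iInter fun y => meas_imp (hs y) _)

lemma shift_shift (s t : Vertex) (η : Config) : shift s (shift t η) = shift (s + t) η := by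
  funext e; simp [shift, sub_sub]

lemma shift_zero (η : Config) : shift 0 η = η := by
  funext e; simp [shift]

lemma joins_trans (w u v t : Vertex) (d : Bool) (h : joins (w, d) u v) :
    joins (w - t, d) (u - t) (v - t) := by
  rcases h with ⟨rfl, h⟩ | ⟨rfl, h⟩
  · exact Or.inl ⟨rfl, by rw [sub_add_eq_add_sub, h]⟩
  · exact Or.inr ⟨rfl, by rw [sub_add_eq_add_sub, h]⟩

lemma joins_sub_iff (w u v t : Vertex) (d : Bool) :
    joins (w - t, d) (u - t) (v - t) ↔ joins (w, d) u v := by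
  constructor
  · intro h
    have h2 := joins_trans (w - t) (u - t) (v - t) (-t) d h
    simpa using h2
  · exact joins_trans w u v t d

lemma adj_shift (t : Vertex) (η : Config) (u v : Vertex) :
    (openGraph (shift t η)).Adj u v ↔ (openGraph η).Adj (u - t) (v - t) := by
  simp only [openGraph_adj]
  constructor
  · rintro ⟨hne, ⟨w, d⟩, he, hj⟩
    refine ⟨fun h => hne (by have := congrArg (· + t) h; simpa using this), ⟨(w - t, d), he, ?_⟩⟩
    exact (joins_sub_iff w u v t d).mpr hj
  · rintro ⟨hne, ⟨w, d⟩, he, hj⟩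
    refine ⟨fun h => hne (by rw [h]), ⟨(w + t, d), ?_, ?_⟩⟩
    · show η ((w + t) - t, d) = true
      rwa [add_sub_cancel_right]
    · have : joins ((w + t) - t, d) (u - t) (v - t) := by rwa [add_sub_cancel_right]
      exact (joins_sub_iff (w + t) u v t d).mp this

lemma reach_shift_mp (t : Vertex) (η : Config) {u v : Vertex}
    (h : (openGraph (shift t η)).Reachable u v) :
    (openGraph η).Reachable (u - t) (v - t) := by
  rw [SimpleGraph.reachable_iff_reflTransGen] at h ⊢
  induction h with
  | refl => exact Relation.ReflTransGen.refl
  | tail _ hadj ih => exact ih.tail ((adj_shift t η _ _).mp hadj)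

lemma reach_shift (t : Vertex) (η : Config) (u v : Vertex) :
    (openGraph (shift t η)).Reachable u v ↔ (openGraph η).Reachable (u - t) (v - t) := by
  constructor
  · exact reach_shift_mp t η
  · intro h
    have h' : (openGraph (shift (-t) (shift t η))).Reachable (u - t) (v - t) := by
      rwa [shift_shift, neg_add_cancel, shift_zero]
    have h2 := reach_shift_mp (-t) (shift t η) h'
    simpa using h2

lemma cl_shift (t : Vertex) (η : Config) (v : Vertex) :
    cl (shift t η) v = (fun u => u - t) ⁻¹' cl η (v - t) := by
  ext u
  exact reach_shift t η v u

lemma cl_eq_of_mem (η : Config) {v u : Vertex} (h : u ∈ cl η v) : cl η v = cl η u := by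
  ext w
  exact ⟨fun hw => (h : (openGraph η).Reachable v u).symm.trans hw,
    fun hw => (h : (openGraph η).Reachable v u).trans hw⟩

lemma finite_preimage_sub {α : Type} [AddGroup α] (t : α) (S : Set α) :
    ((fun x => x - t) ⁻¹' S).Finite ↔ S.Finite := by
  constructor
  · intro h
    have hS : S = (fun x => x - t) '' ((fun x => x - t) ⁻¹' S) :=
      (Set.image_preimage_eq S (fun y => ⟨y + t, by simp⟩)).symm
    rw [hS]
    exact h.image _
  · intro h
    exact h.preimage (fun a _ b _ hab => by simpa using hab)

lemma infinite_preimage_sub {α : Type} [AddGroup α] (t : α) (S : Set α) :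
    ((fun x => x - t) ⁻¹' S).Infinite ↔ S.Infinite :=
  not_congr (finite_preimage_sub t S)

lemma isLeast_preimage_sub (t : ℤ) (S : Set ℤ) (b : ℤ) :
    IsLeast ((fun x => x - t) ⁻¹' S) b ↔ IsLeast S (b - t) := by
  constructor
  · rintro ⟨h1, h2⟩
    refine ⟨h1, fun z hz => ?_⟩
    have hz' : (z + t : ℤ) ∈ (fun x => x - t) ⁻¹' S := by simpa using hz
    have := h2 hz'
    omega
  · rintro ⟨h1, h2⟩
    refine ⟨h1, fun y hy => ?_⟩
    have := h2 (show y - t ∈ S from hy)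
    omega

def Eset (v : Vertex) : Set Config :=
  {η | (cl η v).Infinite ∧ IsLeast {y : ℤ | ∃ x : ℤ, (x, y) ∈ cl η v} v.2 ∧
    {x : ℤ | (x, v.2) ∈ cl η v}.Finite ∧ IsLeast {x : ℤ | (x, v.2) ∈ cl η v} v.1}

def Aset (u v : Vertex) : Set Config := Eset v ∩ {η | u ∈ cl η v}

lemma meas_Eset (v : Vertex) : MeasurableSet (Eset v) := by
  have hmem : ∀ u : Vertex, MeasurableSet {η : Config | u ∈ cl η v} := fun u => meas_reach v u
  have hyset : ∀ y : ℤ,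
      MeasurableSet {η : Config | y ∈ {y' : ℤ | ∃ x : ℤ, (x, y') ∈ cl η v}} := by
    intro y
    have h : {η : Config | y ∈ {y' : ℤ | ∃ x : ℤ, (x, y') ∈ cl η v}} =
        ⋃ x : ℤ, {η : Config | (x, y) ∈ cl η v} := by
      ext η; simp
    rw [h]
    exact MeasurableSet.iUnion fun x => hmem (x, y)
  have hxset : ∀ x : ℤ, MeasurableSet {η : Config | x ∈ {x' : ℤ | (x', v.2) ∈ cl η v}} :=
    fun x => hmem (x, v.2)
  have h1 : MeasurableSet {η : Config | (cl η v).Infinite} := by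
    have he : {η : Config | (cl η v).Infinite} = {η : Config | (cl η v).Finite}ᶜ := rfl
    rw [he]
    exact (meas_finite (fun η => cl η v) hmem).compl
  have h2 := meas_isLeast (fun η => {y : ℤ | ∃ x : ℤ, (x, y) ∈ cl η v}) hyset v.2
  have h3 := meas_finite (fun η => {x : ℤ | (x, v.2) ∈ cl η v}) hxset
  have h4 := meas_isLeast (fun η => {x : ℤ | (x, v.2) ∈ cl η v}) hxset v.1
  exact h1.inter (h2.inter (h3.inter h4))

lemma shift_mem_Eset (t v : Vertex) (η : Config) : shift t η ∈ Eset v ↔ η ∈ Eset (v - t) := by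
  obtain ⟨s1, s2⟩ := t
  obtain ⟨a, b⟩ := v
  have hcl := cl_shift (s1, s2) η (a, b)
  have hy : {y : ℤ | ∃ x : ℤ, (x, y) ∈ (fun u : Vertex => u - (s1, s2)) ⁻¹' cl η ((a, b) - (s1, s2))}
      = (fun y : ℤ => y - s2) ⁻¹' {y : ℤ | ∃ x : ℤ, (x, y) ∈ cl η ((a, b) - (s1, s2))} := by
    ext y
    simp only [Set.mem_setOf_eq, Set.mem_preimage, Prod.mk_sub_mk]
    constructor
    · rintro ⟨x, hx⟩; exact ⟨x - s1, hx⟩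
    · rintro ⟨x, hx⟩; exact ⟨x + s1, by simpa using hx⟩
  have hx : {x : ℤ | (x, b) ∈ (fun u : Vertex => u - (s1, s2)) ⁻¹' cl η ((a, b) - (s1, s2))}
      = (fun x : ℤ => x - s1) ⁻¹' {x : ℤ | (x, b - s2) ∈ cl η ((a, b) - (s1, s2))} := by
    ext x
    simp only [Set.mem_setOf_eq, Set.mem_preimage, Prod.mk_sub_mk]
  simp only [Prod.mk_sub_mk] at hy hx
  simp only [Eset, Set.mem_setOf_eq, hcl, Prod.mk_sub_mk, hy, hx]
  exact and_congr (infinite_preimage_sub _ _)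
    (and_congr (isLeast_preimage_sub _ _ _)
      (and_congr (finite_preimage_sub _ _) (isLeast_preimage_sub _ _ _)))

lemma shift_preimage_A (t u v : Vertex) : shift t ⁻¹' Aset u v = Aset (u - t) (v - t) := by
  ext η
  simp only [Aset, Set.mem_preimage, Set.mem_inter_iff, Set.mem_setOf_eq]
  refine and_congr (shift_mem_Eset t v η) ?_
  rw [cl_shift]
  exact Iff.rfl

lemma Aset_self (v : Vertex) : Aset v v = Eset v := by
  have h : {η : Config | v ∈ cl η v} = Set.univ :=
    Set.eq_univ_of_forall fun η => SimpleGraph.Reachable.refl v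
  rw [Aset, h, Set.inter_univ]

lemma A_disjoint : Pairwise (Function.onFun Disjoint (fun v => Aset (0 : Vertex) v)) := by
  intro v v' hne
  simp only [Function.onFun]
  rw [Set.disjoint_left]
  rintro η ⟨hE, h0⟩ ⟨hE', h0'⟩
  apply hne
  have hclv : cl η v = cl η (0 : Vertex) := cl_eq_of_mem η h0
  have hclv' : cl η v' = cl η (0 : Vertex) := cl_eq_of_mem η h0'
  obtain ⟨-, hy, -, hx⟩ := hE
  obtain ⟨-, hy', -, hx'⟩ := hE'
  rw [hclv] at hy hx
  rw [hclv'] at hy' hx'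
  have h2 : v.2 = v'.2 := hy.unique hy'
  have h1 : v.1 = v'.1 := by
    rw [h2] at hx
    exact hx.unique hx'
  exact Prod.ext h1 h2

/-- For a translation-invariant percolation on `ℤ²`, almost
surely, every infinite cluster of `G_η` whose set of second coordinates has a
minimum `b` meets the line `y = b` in infinitely many vertices. -/
theorem lowermost_line_intersection_infinite
    (μ : Measure Config) [IsProbabilityMeasure μ]
    (hinv : ∀ t : Vertex, MeasurePreserving (shift t) μ μ) :
    ∀ᵐ η ∂μ, ∀ C : Set Vertex, IsCluster η C → C.Infinite →
      ∀ b : ℤ, IsLeast {y : ℤ | ∃ x : ℤ, (x, y) ∈ C} b →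
        {x : ℤ | (x, b) ∈ C}.Infinite := by
  classical
  have hEm : ∀ v : Vertex, MeasurableSet (Eset v) := meas_Eset
  have hAm : ∀ u v : Vertex, MeasurableSet (Aset u v) := fun u v =>
    (hEm v).inter (meas_reach v u)
  have hAshift : ∀ t u v : Vertex, μ (Aset (u - t) (v - t)) = μ (Aset u v) := by
    intro t u v
    rw [← shift_preimage_A t u v]
    exact (hinv t).measure_preimage (hAm u v).nullMeasurableSet
  have key1 : ∑' v : Vertex, μ (Aset 0 v) ≤ 1 := by
    rw [← measure_iUnion A_disjoint (fun v => hAm 0 v)]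
    exact prob_le_one
  have key2 : ∑' u : Vertex, μ (Aset u 0) = ∑' v : Vertex, μ (Aset 0 v) := by
    have h : ∀ u : Vertex, μ (Aset u 0) = μ (Aset 0 (-u)) := by
      intro u
      have h2 := hAshift u u 0
      rw [sub_self, zero_sub] at h2
      exact h2.symm
    calc ∑' u : Vertex, μ (Aset u 0) = ∑' u : Vertex, μ (Aset 0 (-u)) := tsum_congr h
      _ = ∑' v : Vertex, μ (Aset 0 v) := by
          exact (Equiv.neg Vertex).tsum_eq (fun v => μ (Aset 0 v))
  have key4 : ∀ η ∈ Eset (0 : Vertex),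
      ∑' u : Vertex, (Aset u 0).indicator (fun _ => (1 : ℝ≥0∞)) η = ⊤ := by
    intro η hη
    have h : ∀ u : Vertex, (Aset u 0).indicator (fun _ => (1 : ℝ≥0∞)) η =
        (cl η 0).indicator (fun _ => (1 : ℝ≥0∞)) u := by
      intro u
      by_cases hu : u ∈ cl η 0
      · have hA : η ∈ Aset u 0 := ⟨hη, hu⟩
        rw [Set.indicator_of_mem hA, Set.indicator_of_mem hu]
      · rw [Set.indicator_of_notMem (fun hc => hu hc.2), Set.indicator_of_notMem hu]
    rw [tsum_congr h, ← tsum_subtype (cl η 0) (fun _ => (1 : ℝ≥0∞))]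
    have hinf : (cl η (0 : Vertex)).Infinite := hη.1
    haveI : Infinite (cl η (0 : Vertex)) := Set.infinite_coe_iff.mpr hinf
    exact ENNReal.tsum_const_eq_top_of_ne_zero one_ne_zero
  have key5 : μ (Eset (0 : Vertex)) = 0 := by
    by_contra h0
    have hle : (⊤ : ℝ≥0∞) * μ (Eset (0 : Vertex)) ≤ 1 := by
      calc (⊤ : ℝ≥0∞) * μ (Eset (0 : Vertex))
          = ∫⁻ η, (Eset (0 : Vertex)).indicator (fun _ => (⊤ : ℝ≥0∞)) η ∂μ :=
            (lintegral_indicator_const (hEm 0) ⊤).symm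
        _ ≤ ∫⁻ η, ∑' u : Vertex, (Aset u 0).indicator (fun _ => (1 : ℝ≥0∞)) η ∂μ := by
            apply lintegral_mono
            intro η
            by_cases hη : η ∈ Eset (0 : Vertex)
            · rw [Set.indicator_of_mem hη]
              exact le_of_eq (key4 η hη).symm
            · rw [Set.indicator_of_notMem hη]; exact zero_le
        _ = ∑' u : Vertex, ∫⁻ η, (Aset u 0).indicator (fun _ => (1 : ℝ≥0∞)) η ∂μ :=
            lintegral_tsum fun u => (measurable_const.indicator (hAm u 0)).aemeasurable
        _ = ∑' u : Vertex, μ (Aset u 0) := by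
            refine tsum_congr fun u => ?_
            rw [lintegral_indicator_const (hAm u 0), one_mul]
        _ = ∑' v : Vertex, μ (Aset 0 v) := key2
        _ ≤ 1 := key1
    rw [ENNReal.top_mul h0] at hle
    exact absurd hle (by simp)
  have key6 : ∀ v : Vertex, μ (Eset v) = 0 := by
    intro v
    have h := hAshift v v v
    rw [sub_self] at h
    calc μ (Eset v) = μ (Aset v v) := by rw [Aset_self]
      _ = μ (Aset 0 0) := h.symm
      _ = μ (Eset 0) := by rw [Aset_self]
      _ = 0 := key5
  have hN : μ (⋃ v : Vertex, Eset v) = 0 := measure_iUnion_null key6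
  rw [ae_iff]
  refine measure_mono_null ?_ hN
  intro η hη
  simp only [Set.mem_setOf_eq] at hη
  push_neg at hη
  obtain ⟨C, hC, hCinf, b, hb, hfin⟩ := hη
  obtain ⟨w, hCw⟩ := hC
  have hCcl : C = cl η w := hCw
  obtain ⟨x0, hx0⟩ := hb.1
  have hx0F : x0 ∈ hfin.toFinset := hfin.mem_toFinset.mpr hx0
  have hFne : hfin.toFinset.Nonempty := ⟨x0, hx0F⟩
  set m := hfin.toFinset.min' hFne with hm
  have hmC : (m, b) ∈ C := hfin.mem_toFinset.mp (hfin.toFinset.min'_mem hFne)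
  have hclm : cl η ((m, b) : Vertex) = C := by
    rw [hCcl] at hmC ⊢
    exact (cl_eq_of_mem η hmC).symm
  refine Set.mem_iUnion.mpr ⟨((m, b) : Vertex), ?_, ?_, ?_, ?_⟩
  · rw [hclm]; exact hCinf
  · rw [hclm]; exact hb
  · rw [hclm]; exact hfin
  · rw [hclm]
    exact ⟨hmC, fun x hx => hfin.toFinset.min'_le x (hfin.mem_toFinset.mpr hx)⟩
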